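/- Suppose for the product ensemble ⊗_{l=1}^L E^l and a tuple x ∈ N_n it holds that η_x ρ_x − η_c ρ_c is block positive for all c ∈ N_n. Then p_L(⊗_l E^l) = p_SEP(⊗_l E^l) = η_x, and the optimal LOCC discrimination is factorizable: p_L(⊗_l E^l) = Π_l p_L(E^l), with p_L(E^l) = η_{x_l}^l for each l. -/

import Mathlib

open Matrix BigOperators ComplexOrder

set_option linter.unusedSectionVars false
set_option linter.unusedVariables false
set_option maxHeartbeats 1000000

noncomputable section

/-- Tensor product of a family of local operators, one per party/step. -/
def tensorFam {m : ℕ} {ι : Fin m → Type*} [∀ k, Fintype (ι k)]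
    (A : (k : Fin m) → Matrix (ι k) (ι k) ℂ) :
    Matrix ((k : Fin m) → ι k) ((k : Fin m) → ι k) ℂ :=
  Matrix.of fun i j => ∏ k, A k (i k) (j k)

/-- Separable operator: a sum of tensor products of positive semidefinite local operators. -/
def IsSep {m : ℕ} {ι : Fin m → Type*} [∀ k, Fintype (ι k)]
    (E : Matrix ((k : Fin m) → ι k) ((k : Fin m) → ι k) ℂ) : Prop :=
  ∃ (S : Finset ℕ) (A : ℕ → (k : Fin m) → Matrix (ι k) (ι k) ℂ),
    (∀ s ∈ S, ∀ k, (A s k).PosSemidef) ∧ E = ∑ s ∈ S, tensorFam (A s)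

/-- Separable state: separable with trace one. -/
def IsSepState {m : ℕ} {ι : Fin m → Type*} [∀ k, Fintype (ι k)]
    (σ : Matrix ((k : Fin m) → ι k) ((k : Fin m) → ι k) ℂ) : Prop :=
  IsSep σ ∧ σ.trace = 1

/-- Block positive: nonnegative mean value on every separable state. -/
def IsBlockPos {m : ℕ} {ι : Fin m → Type*} [∀ k, Fintype (ι k)]
    (E : Matrix ((k : Fin m) → ι k) ((k : Fin m) → ι k) ℂ) : Prop :=
  ∀ σ, IsSepState σ → 0 ≤ ((E * σ).trace).re

def IsPOVM {α N : Type*} [Fintype α] [Fintype N] [DecidableEq N]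
    (M : α → Matrix N N ℂ) : Prop :=
  (∀ i, (M i).PosSemidef) ∧ ∑ i, M i = 1

/-- Average success probability of a guessing strategy. -/
def succProb {α N : Type*} [Fintype α] [Fintype N]
    (η : α → ℝ) (ρ M : α → Matrix N N ℂ) : ℝ :=
  ∑ i, η i * ((ρ i * M i).trace).re

/-- Tensor product over the sequence steps, with indices grouped by party:
party k holds its parts of all L systems. -/
def stepTensor {L m : ℕ} {ι : Fin L → Fin m → Type*} [∀ l k, Fintype (ι l k)]
    (A : (l : Fin L) → Matrix ((k : Fin m) → ι l k) ((k : Fin m) → ι l k) ℂ) :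
    Matrix ((k : Fin m) → (l : Fin L) → ι l k) ((k : Fin m) → (l : Fin L) → ι l k) ℂ :=
  Matrix.of fun i j => ∏ l, A l (fun k => i k l) (fun k => j k l)

section Aux
variable {N : Type*} [Fintype N]

lemma aux_psd_diag_nonneg {M : Matrix N N ℂ} (hM : M.PosSemidef) (i : N) :
    0 ≤ M i i := by
  classical
  have h := hM.dotProduct_mulVec_nonneg (Pi.single i 1)
  simpa [dotProduct, Matrix.mulVec, Pi.single_apply, mul_ite, ite_mul,
    Finset.sum_ite_eq, Finset.sum_ite_eq'] using h

lemma aux_psd_trace_nonneg {M : Matrix N N ℂ} (hM : M.PosSemidef) :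
    0 ≤ M.trace :=
  Finset.sum_nonneg fun i _ => aux_psd_diag_nonneg hM i

lemma aux_real_of_nonneg {z : ℂ} (h : 0 ≤ z) : z = ((z.re : ℝ) : ℂ) ∧ 0 ≤ z.re := by
  rw [Complex.nonneg_iff] at h
  exact ⟨Complex.ext (by simp) (by simp [h.2.symm]), h.1⟩

lemma aux_psd_trace_zero {M : Matrix N N ℂ} (hM : M.PosSemidef) (h : M.trace = 0) :
    M = 0 := by
  classical
  obtain ⟨B, rfl⟩ : ∃ B : Matrix N N ℂ, M = Bᴴ * B := by
    open scoped MatrixOrder in exact CStarAlgebra.nonneg_iff_eq_star_mul_self.mp hM.nonneg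
  suffices hB : B = 0 by simp [hB]
  have htr : (Bᴴ * B).trace = ∑ j : N, ∑ i : N, star (B i j) * B i j := by
    simp [Matrix.trace, Matrix.diag, Matrix.mul_apply, Matrix.conjTranspose_apply]
  rw [htr] at h
  have hnn : ∀ j ∈ Finset.univ, (0:ℂ) ≤ ∑ i : N, star (B i j) * B i j :=
    fun j _ => Finset.sum_nonneg fun i _ => star_mul_self_nonneg _
  ext i j
  have h1 := (Finset.sum_eq_zero_iff_of_nonneg hnn).mp h j (Finset.mem_univ j)
  have h2 := (Finset.sum_eq_zero_iff_of_nonneg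
    (fun i _ => star_mul_self_nonneg (B i j))).mp h1 i (Finset.mem_univ i)
  have : B i j = 0 := by
    by_contra hne
    exact hne (by simpa [mul_eq_zero, star_eq_zero] using h2 : B i j = 0)
  simpa using this

lemma aux_psd_smul {c : ℝ} (hc : 0 ≤ c) {M : Matrix N N ℂ} (hM : M.PosSemidef) :
    ((c : ℂ) • M).PosSemidef := by
  refine Matrix.posSemidef_iff_dotProduct_mulVec.mpr ⟨?_, fun x => ?_⟩
  · unfold Matrix.IsHermitian
    rw [Matrix.conjTranspose_smul, hM.1]
    simp
  · rw [Matrix.smul_mulVec, dotProduct_smul, smul_eq_mul]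
    exact mul_nonneg (by exact_mod_cast Complex.real_le_real.mpr hc) (hM.dotProduct_mulVec_nonneg x)

lemma aux_trace_mul_psd_nonneg {A B : Matrix N N ℂ} (hA : A.PosSemidef)
    (hB : B.PosSemidef) : 0 ≤ (A * B).trace := by
  classical
  obtain ⟨C, rfl⟩ : ∃ C : Matrix N N ℂ, B = Cᴴ * C := by
    open scoped MatrixOrder in exact CStarAlgebra.nonneg_iff_eq_star_mul_self.mp hB.nonneg
  have : (A * (Cᴴ * C)).trace = (C * A * Cᴴ).trace := by
    rw [← Matrix.mul_assoc, Matrix.trace_mul_comm, ← Matrix.mul_assoc]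
  rw [this]
  exact aux_psd_trace_nonneg (hA.mul_mul_conjTranspose_same C)

end Aux

section TF
variable {m : ℕ} {ι : Fin m → Type*} [∀ k, Fintype (ι k)]

lemma tensorFam_trace (A : (k : Fin m) → Matrix (ι k) (ι k) ℂ) :
    (tensorFam A).trace = ∏ k, (A k).trace := by
  simp only [Matrix.trace, Matrix.diag, tensorFam, Matrix.of_apply]
  exact (Fintype.prod_sum fun k j => A k j j).symm

lemma tensorFam_smul (c : Fin m → ℂ) (A : (k : Fin m) → Matrix (ι k) (ι k) ℂ) :
    tensorFam (fun k => c k • A k) = (∏ k, c k) • tensorFam A := by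
  ext i j
  simp [tensorFam, Finset.prod_mul_distrib]

lemma tensorFam_eq_zero {A : (k : Fin m) → Matrix (ι k) (ι k) ℂ} {k₀ : Fin m}
    (h : A k₀ = 0) : tensorFam A = 0 := by
  ext i j
  simp only [tensorFam, Matrix.of_apply, Matrix.zero_apply]
  exact Finset.prod_eq_zero (Finset.mem_univ k₀) (by simp [h])

lemma tensorFam_one [∀ k, DecidableEq (ι k)] :
    tensorFam (fun k => (1 : Matrix (ι k) (ι k) ℂ)) = 1 := by
  ext i j
  simp only [tensorFam, Matrix.of_apply, Matrix.one_apply]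
  by_cases h : i = j
  · subst h; simp
  · rw [if_neg h]
    obtain ⟨k, hk⟩ := Function.ne_iff.mp h
    exact Finset.prod_eq_zero (Finset.mem_univ k) (by simp [hk])

end TF

section BP
variable {m : ℕ} {ι : Fin m → Type*} [∀ k, Fintype (ι k)]

lemma isSep_tensorFam {A : (k : Fin m) → Matrix (ι k) (ι k) ℂ}
    (hA : ∀ k, (A k).PosSemidef) : IsSep (tensorFam A) := by
  exact ⟨{0}, fun _ => A, fun s _ k => hA k, by simp⟩

lemma isSep_one [∀ k, DecidableEq (ι k)] :
    IsSep (1 : Matrix ((k : Fin m) → ι k) ((k : Fin m) → ι k) ℂ) := by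
  rw [← tensorFam_one]
  exact isSep_tensorFam fun k => Matrix.PosSemidef.one

lemma isSep_zero : IsSep (0 : Matrix ((k : Fin m) → ι k) ((k : Fin m) → ι k) ℂ) :=
  ⟨∅, fun _ _ => 0, by simp, by simp⟩

lemma blockPos_pairing_single {W : Matrix ((k : Fin m) → ι k) ((k : Fin m) → ι k) ℂ}
    (hW : IsBlockPos W) {A : (k : Fin m) → Matrix (ι k) (ι k) ℂ}
    (hA : ∀ k, (A k).PosSemidef) : 0 ≤ ((W * tensorFam A).trace).re := by
  set r : Fin m → ℝ := fun k => ((A k).trace).re with hr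
  have hrk : ∀ k, (A k).trace = ((r k : ℝ) : ℂ) ∧ 0 ≤ r k := fun k =>
    aux_real_of_nonneg (aux_psd_trace_nonneg (hA k))
  rcases eq_or_lt_of_le (Finset.prod_nonneg (fun k _ => (hrk k).2)) with h0 | hpos
  · -- some factor vanishes, tensorFam A = 0
    obtain ⟨k₀, -, hk₀⟩ := Finset.prod_eq_zero_iff.mp h0.symm
    have hAk : A k₀ = 0 := aux_psd_trace_zero (hA k₀) (by rw [(hrk k₀).1, hk₀]; simp)
    rw [tensorFam_eq_zero hAk]
    simp
  · -- normalize
    set t : ℝ := ∏ k, r k with ht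
    rcases Nat.eq_zero_or_pos m with hm | hm
    · -- m = 0 : t = 1
      have ht1 : t = 1 := by
        rw [ht]
        subst hm
        simp
      have hσ : IsSepState (tensorFam A) := by
        refine ⟨isSep_tensorFam hA, ?_⟩
        rw [tensorFam_trace]
        have : ∏ k, (A k).trace = ((t : ℝ) : ℂ) := by
          rw [ht, Complex.ofReal_prod]
          exact Finset.prod_congr rfl fun k _ => (hrk k).1
        rw [this, ht1]; simp
      exact hW _ hσ
    · haveI : NeZero m := ⟨hm.ne'⟩
      set c : Fin m → ℂ := fun k => if k = 0 then ((t⁻¹ : ℝ) : ℂ) else 1 with hc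
      have hprodc : ∏ k, c k = ((t⁻¹ : ℝ) : ℂ) := by
        rw [hc]
        simp [Finset.prod_ite_eq']
      have hσ : IsSepState (((t⁻¹ : ℝ) : ℂ) • tensorFam A) := by
        constructor
        · refine ⟨{0}, fun _ => fun k => c k • A k, fun s _ k => ?_, by
            simp [tensorFam_smul, hprodc]⟩
          rw [hc]
          dsimp only
          split
          · exact aux_psd_smul (inv_nonneg.mpr (le_of_lt hpos)) (hA k)
          · simpa using (hA k)
        · rw [Matrix.trace_smul, tensorFam_trace, smul_eq_mul]
          have : ∏ k, (A k).trace = ((t : ℝ) : ℂ) := by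
            rw [ht, Complex.ofReal_prod]
            exact Finset.prod_congr rfl fun k _ => (hrk k).1
          rw [this, ← Complex.ofReal_mul, inv_mul_cancel₀ (ne_of_gt hpos)]
          simp
      have h := hW _ hσ
      have hre : ((W * (((t⁻¹ : ℝ) : ℂ) • tensorFam A)).trace).re
          = t⁻¹ * ((W * tensorFam A).trace).re := by
        rw [Matrix.mul_smul, Matrix.trace_smul, smul_eq_mul]
        simp [Complex.re_ofReal_mul]
      rw [hre] at h
      have := mul_nonneg (le_of_lt hpos) h
      rwa [← mul_assoc, mul_inv_cancel₀ (ne_of_gt hpos), one_mul] at this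

lemma blockPos_pairing {W E : Matrix ((k : Fin m) → ι k) ((k : Fin m) → ι k) ℂ}
    (hW : IsBlockPos W) (hE : IsSep E) : 0 ≤ ((W * E).trace).re := by
  obtain ⟨S, A, hA, rfl⟩ := hE
  rw [Matrix.mul_sum, Matrix.trace_sum, Complex.re_sum]
  exact Finset.sum_nonneg fun s hs => blockPos_pairing_single hW (hA s hs)

end BP

section ST
variable {L m : ℕ} {ι : Fin L → Fin m → Type*} [∀ l k, Fintype (ι l k)]

lemma stepTensor_trace
    (A : (l : Fin L) → Matrix ((k : Fin m) → ι l k) ((k : Fin m) → ι l k) ℂ) :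
    (stepTensor A).trace = ∏ l, (A l).trace := by
  simp only [Matrix.trace, Matrix.diag, stepTensor, Matrix.of_apply]
  rw [show (∑ i : (k : Fin m) → (l : Fin L) → ι l k,
        ∏ l, A l (fun k => i k l) (fun k => i k l))
      = ∑ j : (l : Fin L) → (k : Fin m) → ι l k, ∏ l, A l (j l) (j l) from
    Fintype.sum_equiv (Equiv.piComm fun k l => ι l k) _ _ (fun i => rfl)]
  exact (Fintype.prod_sum fun l j => A l j j).symm

lemma stepTensor_mul
    (A B : (l : Fin L) → Matrix ((k : Fin m) → ι l k) ((k : Fin m) → ι l k) ℂ) :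
    stepTensor A * stepTensor B = stepTensor (fun l => A l * B l) := by
  ext i j
  simp only [Matrix.mul_apply, stepTensor, Matrix.of_apply]
  rw [show (∑ p : (k : Fin m) → (l : Fin L) → ι l k,
        (∏ l, A l (fun k => i k l) (fun k => p k l)) *
          ∏ l, B l (fun k => p k l) (fun k => j k l))
      = ∑ q : (l : Fin L) → (k : Fin m) → ι l k,
        (∏ l, A l (fun k => i k l) (q l)) * ∏ l, B l (q l) (fun k => j k l) from
    Fintype.sum_equiv (Equiv.piComm fun k l => ι l k) _ _ (fun p => rfl)]
  rw [Fintype.prod_sum fun l q => A l (fun k => i k l) q * B l q (fun k => j k l)]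
  refine Finset.sum_congr rfl fun q _ => ?_
  exact Finset.prod_mul_distrib.symm

end ST

lemma succProb_trivial {α N : Type*} [Fintype α] [DecidableEq α] [Fintype N] [DecidableEq N]
    (η : α → ℝ) (ρ : α → Matrix N N ℂ) (y : α) :
    succProb η ρ (fun i => if i = y then (1 : Matrix N N ℂ) else 0)
      = η y * ((ρ y).trace).re := by
  unfold succProb
  rw [Finset.sum_eq_single y]
  · simp
  · intro i _ hi
    simp [hi]
  · intro h
    exact absurd (Finset.mem_univ y) h

lemma succProb_factor {L m : ℕ} {ι : Fin L → Fin m → Type*} [∀ l k, Fintype (ι l k)]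
    {n : Fin L → ℕ} (η : (l : Fin L) → Fin (n l) → ℝ)
    (ρ M : (l : Fin L) → Fin (n l) → Matrix ((k : Fin m) → ι l k) ((k : Fin m) → ι l k) ℂ)
    (hρ : ∀ l i, (ρ l i).PosSemidef) (hM : ∀ l i, (M l i).PosSemidef) :
    succProb (fun c : (l : Fin L) → Fin (n l) => ∏ l, η l (c l))
      (fun c => stepTensor (fun l => ρ l (c l)))
      (fun c => stepTensor (fun l => M l (c l)))
      = ∏ l, succProb (η l) (ρ l) (M l) := by
  unfold succProb
  rw [Fintype.prod_sum fun l i => η l i * ((ρ l i * M l i).trace).re]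
  refine Finset.sum_congr rfl fun c _ => ?_
  rw [stepTensor_mul, stepTensor_trace]
  have hreal : ∀ l, ((ρ l (c l) * M l (c l)).trace)
      = (((((ρ l (c l) * M l (c l)).trace).re : ℝ)) : ℂ) :=
    fun l => (aux_real_of_nonneg (aux_trace_mul_psd_nonneg (hρ l (c l)) (hM l (c l)))).1
  have : (∏ l, (ρ l (c l) * M l (c l)).trace).re
      = ∏ l, ((ρ l (c l) * M l (c l)).trace).re := by
    rw [Finset.prod_congr rfl fun l _ => hreal l, ← Complex.ofReal_prod,
      Complex.ofReal_re]
  rw [this, ← Finset.prod_mul_distrib]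

/-- if η_x ρ_x − η_c ρ_c is block positive (w.r.t. the m parties) for all
sequences c, then p_L(⊗E^l) = p_SEP(⊗E^l) = η_x, the optimal LOCC discrimination is
factorizable, and p_L(E^l) = η^l_{x_l} for each l. -/
theorem seq_locc_factorizable_of_blockpos {L m : ℕ} {ι : Fin L → Fin m → Type*}
    [∀ l k, Fintype (ι l k)] [∀ l k, DecidableEq (ι l k)]
    {n : Fin L → ℕ}
    (η : (l : Fin L) → Fin (n l) → ℝ)
    (ρ : (l : Fin L) → Fin (n l) → Matrix ((k : Fin m) → ι l k) ((k : Fin m) → ι l k) ℂ)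
    (hη : ∀ l i, 0 < η l i) (hsum : ∀ l, ∑ i, η l i = 1)
    (hρ : ∀ l i, (ρ l i).PosSemidef ∧ (ρ l i).trace = 1)
    (x : (l : Fin L) → Fin (n l))
    (hbp : ∀ c : (l : Fin L) → Fin (n l),
      IsBlockPos (ι := fun k => (l : Fin L) → ι l k)
        (((∏ l, η l (x l) : ℝ) : ℂ) • stepTensor (fun l => ρ l (x l)) -
         ((∏ l, η l (c l) : ℝ) : ℂ) • stepTensor (fun l => ρ l (c l))))
    -- per-step LOCC measurement classes
    (C : (l : Fin L) → Set (Fin (n l) → Matrix ((k : Fin m) → ι l k) ((k : Fin m) → ι l k) ℂ))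
    (hC : ∀ l, ∀ M ∈ C l, IsPOVM M ∧ ∀ i, IsSep (M i))
    (htriv : ∀ l, ∀ y : Fin (n l),
      (fun i => if i = y then (1 : Matrix ((k : Fin m) → ι l k) ((k : Fin m) → ι l k) ℂ) else 0) ∈ C l)
    -- LOCC measurement class on the whole sequence space
    (Cp : Set (((l : Fin L) → Fin (n l)) →
      Matrix ((k : Fin m) → (l : Fin L) → ι l k) ((k : Fin m) → (l : Fin L) → ι l k) ℂ))
    (hCp : ∀ M ∈ Cp, IsPOVM M ∧ ∀ c, IsSep (ι := fun k => (l : Fin L) → ι l k) (M c))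
    (htrivp : ∀ y : (l : Fin L) → Fin (n l),
      (fun c => if c = y then (1 : Matrix ((k : Fin m) → (l : Fin L) → ι l k) ((k : Fin m) → (l : Fin L) → ι l k) ℂ) else 0) ∈ Cp)
    (hclosed : ∀ M : (l : Fin L) → Fin (n l) → Matrix ((k : Fin m) → ι l k) ((k : Fin m) → ι l k) ℂ,
      (∀ l, M l ∈ C l) → (fun c => stepTensor (fun l => M l (c l))) ∈ Cp)
    (pL : Fin L → ℝ) (hpL : ∀ l, IsLUB ((fun M => succProb (η l) (ρ l) M) '' C l) (pL l))
    (pLtot : ℝ)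
    (hpLtot : IsLUB ((fun M => succProb (fun c : (l : Fin L) → Fin (n l) => ∏ l, η l (c l))
      (fun c => stepTensor (fun l => ρ l (c l))) M) '' Cp) pLtot)
    (pSEPtot : ℝ)
    (hpSEPtot : IsLUB ((fun M => succProb (fun c : (l : Fin L) → Fin (n l) => ∏ l, η l (c l))
      (fun c => stepTensor (fun l => ρ l (c l))) M) ''
      {M | IsPOVM M ∧ ∀ c, IsSep (ι := fun k => (l : Fin L) → ι l k) (M c)}) pSEPtot) :
    pLtot = ∏ l, η l (x l) ∧ pSEPtot = pLtot ∧
    pLtot = ∏ l, pL l ∧ ∀ l, pL l = η l (x l) := by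
    classical
  set ηx : ℝ := ∏ l, η l (x l) with hηx
  have hηxpos : 0 < ηx := Finset.prod_pos fun l _ => hη l (x l)
  have htrρ : ∀ c : (l : Fin L) → Fin (n l),
      (stepTensor (fun l => ρ l (c l))).trace = 1 := by
    intro c
    rw [stepTensor_trace]
    exact Finset.prod_eq_one fun l _ => (hρ l (c l)).2
  -- upper bound for any separable POVM
  have hub : ∀ M : ((l : Fin L) → Fin (n l)) →
      Matrix ((k : Fin m) → (l : Fin L) → ι l k) ((k : Fin m) → (l : Fin L) → ι l k) ℂ,
      IsPOVM M → (∀ c, IsSep (ι := fun k => (l : Fin L) → ι l k) (M c)) →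
      succProb (fun c => ∏ l, η l (c l)) (fun c => stepTensor (fun l => ρ l (c l))) M ≤ ηx := by
    intro M hpovm hsep
    unfold succProb
    calc ∑ c, (∏ l, η l (c l)) * ((stepTensor (fun l => ρ l (c l)) * M c).trace).re
        ≤ ∑ c, ηx * ((stepTensor (fun l => ρ l (x l)) * M c).trace).re := by
          refine Finset.sum_le_sum fun c _ => ?_
          have h := blockPos_pairing (hbp c) (hsep c)
          have hexp : (((((ηx : ℝ)) : ℂ) • stepTensor (fun l => ρ l (x l)) -
              (((∏ l, η l (c l) : ℝ)) : ℂ) • stepTensor (fun l => ρ l (c l))) * M c).trace.re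
            = ηx * ((stepTensor (fun l => ρ l (x l)) * M c).trace).re
              - (∏ l, η l (c l)) * ((stepTensor (fun l => ρ l (c l)) * M c).trace).re := by
            rw [Matrix.sub_mul, Matrix.smul_mul, Matrix.smul_mul, Matrix.trace_sub,
              Matrix.trace_smul, Matrix.trace_smul, Complex.sub_re]
            simp only [smul_eq_mul, Complex.re_ofReal_mul]
          rw [hexp] at h
          linarith
      _ = ηx * ((stepTensor (fun l => ρ l (x l)) * (∑ c, M c)).trace).re := by
          rw [Matrix.mul_sum, Matrix.trace_sum, Complex.re_sum, Finset.mul_sum]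
      _ = ηx := by rw [hpovm.2, Matrix.mul_one, htrρ x]; simp
  -- value of the trivial sequence measurement
  have htrivval : ∀ y : (l : Fin L) → Fin (n l),
      succProb (fun c : (l : Fin L) → Fin (n l) => ∏ l, η l (c l))
        (fun c => stepTensor (fun l => ρ l (c l)))
        (fun c => if c = y then 1 else 0) = ∏ l, η l (y l) := by
    intro y
    rw [succProb_trivial, htrρ y]
    simp
  have hLtot : pLtot = ηx := by
    refine le_antisymm ?_ ?_
    · refine hpLtot.2 fun v hv => ?_
      obtain ⟨M, hM, rfl⟩ := hv
      exact hub M (hCp M hM).1 (hCp M hM).2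
    · exact hpLtot.1 ⟨_, htrivp x, htrivval x⟩
  have hSEP : pSEPtot = ηx := by
    refine le_antisymm ?_ ?_
    · refine hpSEPtot.2 fun v hv => ?_
      obtain ⟨M, hM, rfl⟩ := hv
      exact hub M hM.1 hM.2
    · refine hpSEPtot.1 ⟨_, ⟨⟨fun c => ?_, ?_⟩, fun c => ?_⟩, htrivval x⟩
      · split
        · exact Matrix.PosSemidef.one
        · exact Matrix.PosSemidef.zero
      · simp [Finset.sum_ite_eq']
      · split
        · exact isSep_one
        · exact isSep_zero
  have hstep : ∀ l, pL l = η l (x l) := by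
    intro l0
    refine le_antisymm ?_ ?_
    · refine (hpL l0).2 fun v hv => ?_
      obtain ⟨M, hM, rfl⟩ := hv
      dsimp only
      set Nf : (l : Fin L) → Fin (n l) → Matrix ((k : Fin m) → ι l k) ((k : Fin m) → ι l k) ℂ :=
        Function.update (fun l => fun i => if i = x l then 1 else 0) l0 M with hNf
      have hNmem : ∀ l, Nf l ∈ C l := by
        intro l
        by_cases h : l = l0
        · subst h; rw [hNf, Function.update_self]; exact hM
        · rw [hNf, Function.update_of_ne h]; exact htriv l (x l)
      have hNpsd : ∀ l i, (Nf l i).PosSemidef := fun l i => ((hC l (Nf l) (hNmem l)).1).1 i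
      have hcomb := hpLtot.1 ⟨_, hclosed Nf hNmem, rfl⟩
      dsimp only at hcomb
      rw [succProb_factor η ρ Nf (fun l i => (hρ l i).1) hNpsd, hLtot] at hcomb
      have hother : ∀ l, l ≠ l0 → succProb (η l) (ρ l) (Nf l) = η l (x l) := by
        intro l h
        rw [hNf, Function.update_of_ne h, succProb_trivial, (hρ l (x l)).2]
        simp
      have h1 : ∏ l, succProb (η l) (ρ l) (Nf l)
          = succProb (η l0) (ρ l0) M * ∏ l ∈ Finset.univ.erase l0, η l (x l) := by
        rw [← Finset.mul_prod_erase _ _ (Finset.mem_univ l0), hNf, Function.update_self]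
        congr 1
        exact Finset.prod_congr rfl fun l hl => hother l (Finset.ne_of_mem_erase hl)
      have h2 : ηx = η l0 (x l0) * ∏ l ∈ Finset.univ.erase l0, η l (x l) := by
        rw [hηx, ← Finset.mul_prod_erase _ _ (Finset.mem_univ l0)]
      have hP : 0 < ∏ l ∈ Finset.univ.erase l0, η l (x l) :=
        Finset.prod_pos fun l _ => hη l (x l)
      rw [h1, h2] at hcomb
      exact le_of_mul_le_mul_right hcomb hP
    · refine (hpL l0).1 ⟨_, htriv l0 (x l0), ?_⟩
      dsimp only
      rw [succProb_trivial, (hρ l0 (x l0)).2]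
      simp
  refine ⟨hLtot, hSEP.trans hLtot.symm, ?_, hstep⟩
  rw [hLtot, hηx]
  exact Finset.prod_congr rfl fun l _ => (hstep l).symm
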